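/- Assume the latent-variable Fisher information setup. Suppose there exists ν ∈ (0, 1/2] with δ/α ≤ 1 − 2ν, that μ(Ω)·ξ(T) ≤ (1/6)·(να/(β(2−ν)))², and that γ ∈ [3β(2−ν)ξ(T)/(να), να/(2β(2−ν)μ(Ω))]. Then for every nearby tangent space T′ (i.e., T′ = T(M′) for a symmetric M′ with rank(M′) = rank(L*) and ρ(T′,T) ≤ ξ(T)/2) and 𝒴 = Ω × T′, every (S,L) ∈ 𝒴 satisfies g_γ(𝒫_𝒴 𝒜† ℐ* 𝒜 𝒫_𝒴 (S,L)) ≥ (α/2)·g_γ(S,L). -/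

import Mathlib

open Matrix MeasureTheory
open scoped Classical

noncomputable section
set_option maxHeartbeats 1000000
set_option synthInstance.maxHeartbeats 400000


namespace LVGGM

variable {p h : ℕ}

/-- Spectral norm (largest singular value) of a real square matrix. -/
def specNorm (M : Matrix (Fin p) (Fin p) ℝ) : ℝ :=
  ‖Matrix.toEuclideanCLM (𝕜 := ℝ) M‖

/-- Entrywise max norm `‖M‖_∞`. -/
def maxNorm (M : Matrix (Fin p) (Fin p) ℝ) : ℝ :=
  ⨆ i, ⨆ j, |M i j|

/-- Entrywise ℓ₁ norm `‖M‖₁`. -/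
def l1Norm (M : Matrix (Fin p) (Fin p) ℝ) : ℝ :=
  ∑ i, ∑ j, |M i j|

/-- The matrix of the orthogonal projection of ℝ^p onto the column space of `M`. -/
def colProj (M : Matrix (Fin p) (Fin p) ℝ) : Matrix (Fin p) (Fin p) ℝ :=
  LinearMap.toMatrix (EuclideanSpace.basisFun (Fin p) ℝ).toBasis
    (EuclideanSpace.basisFun (Fin p) ℝ).toBasis
    ((LinearMap.range (Matrix.toEuclideanLin M)).subtype ∘ₗ
      (LinearMap.range (Matrix.toEuclideanLin M)).orthogonalProjectionOnto.toLinearMap)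

/-- Singular values of a matrix, as square roots of eigenvalues of `Mᴴ M`. -/
def singVals (M : Matrix (Fin p) (Fin p) ℝ) (i : Fin p) : ℝ :=
  Real.sqrt ((Matrix.posSemidef_conjTranspose_mul_self M).1.eigenvalues i)

/-! ### Sparse tangent spaces -/

/-- Tangent space to the variety of sparse matrices at `M₀`. -/
def OmegaSet (M₀ : Matrix (Fin p) (Fin p) ℝ) : Set (Matrix (Fin p) (Fin p) ℝ) :=
  {N | ∀ i j, M₀ i j = 0 → N i j = 0}

/-- Orthogonal projection onto `OmegaSet M₀`. -/
def projOmega (M₀ N : Matrix (Fin p) (Fin p) ℝ) : Matrix (Fin p) (Fin p) ℝ :=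
  Matrix.of fun i j => if M₀ i j = 0 then 0 else N i j

/-- Orthogonal projection onto the orthogonal complement of `OmegaSet M₀`. -/
def projOmegaPerp (M₀ N : Matrix (Fin p) (Fin p) ℝ) : Matrix (Fin p) (Fin p) ℝ :=
  Matrix.of fun i j => if M₀ i j = 0 then N i j else 0

/-- `μ(Ω(M₀))`: max spectral norm over the `‖·‖_∞`-unit ball of `Ω(M₀)`. -/
def muOmega (M₀ : Matrix (Fin p) (Fin p) ℝ) : ℝ :=
  ⨆ N : {N : Matrix (Fin p) (Fin p) ℝ // N ∈ OmegaSet M₀ ∧ maxNorm N ≤ 1}, specNorm N.1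

/-! ### Low-rank tangent spaces (symmetric version) -/

/-- `𝒫_{T(M)}` for symmetric `M`: `N ↦ P N + N P − P N P` with `P` the column-space projector. -/
def projTsym (M N : Matrix (Fin p) (Fin p) ℝ) : Matrix (Fin p) (Fin p) ℝ :=
  colProj M * N + N * colProj M - colProj M * N * colProj M

/-- `𝒫_{T(M)^⊥}` for symmetric `M`: `N ↦ (I−P) N (I−P)`. -/
def projTsymPerp (M N : Matrix (Fin p) (Fin p) ℝ) : Matrix (Fin p) (Fin p) ℝ :=
  (1 - colProj M) * N * (1 - colProj M)

/-- Tangent space to the variety of symmetric low-rank matrices at symmetric `M`. -/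
def TsetSym (M : Matrix (Fin p) (Fin p) ℝ) : Set (Matrix (Fin p) (Fin p) ℝ) :=
  {N | N.IsHermitian ∧ projTsymPerp M N = 0}

/-- `ξ(T(M))` (symmetric version). -/
def xiT (M : Matrix (Fin p) (Fin p) ℝ) : ℝ :=
  ⨆ N : {N : Matrix (Fin p) (Fin p) ℝ // N ∈ TsetSym M ∧ specNorm N ≤ 1}, maxNorm N.1

/-- `ρ(T(M₁), T(M₂))` (symmetric version). -/
def rhoSym (M₁ M₂ : Matrix (Fin p) (Fin p) ℝ) : ℝ :=
  ⨆ N : {N : Matrix (Fin p) (Fin p) ℝ // specNorm N ≤ 1},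
    specNorm (projTsym M₁ N.1 - projTsym M₂ N.1)

/-! ### Low-rank tangent spaces (general version) -/

/-- `𝒫_{T(M)}` for general `M`: `N ↦ P_U N + N P_V − P_U N P_V`. -/
def projTgen (M N : Matrix (Fin p) (Fin p) ℝ) : Matrix (Fin p) (Fin p) ℝ :=
  colProj M * N + N * colProj Mᵀ - colProj M * N * colProj Mᵀ

/-- `𝒫_{T(M)^⊥}` for general `M`. -/
def projTgenPerp (M N : Matrix (Fin p) (Fin p) ℝ) : Matrix (Fin p) (Fin p) ℝ :=
  (1 - colProj M) * N * (1 - colProj Mᵀ)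

/-- Tangent space to the variety of low-rank matrices at a general matrix `M`. -/
def TsetGen (M : Matrix (Fin p) (Fin p) ℝ) : Set (Matrix (Fin p) (Fin p) ℝ) :=
  {N | projTgenPerp M N = 0}

/-- `ξ(T(M))` (general version). -/
def xiGen (M : Matrix (Fin p) (Fin p) ℝ) : ℝ :=
  ⨆ N : {N : Matrix (Fin p) (Fin p) ℝ // N ∈ TsetGen M ∧ specNorm N ≤ 1}, maxNorm N.1

/-- Euclidean norm of the `i`-th column of `P`, i.e. `‖P e_i‖`. -/
def colEucNorm (P : Matrix (Fin p) (Fin p) ℝ) (i : Fin p) : ℝ :=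
  Real.sqrt (∑ j, (P j i) ^ 2)

/-- Incoherence `inc(M)` of the row/column spaces of `M`. -/
def inc (M : Matrix (Fin p) (Fin p) ℝ) : ℝ :=
  max (⨆ i, colEucNorm (colProj M) i) (⨆ i, colEucNorm (colProj Mᵀ) i)

/-! ### Orthogonal projections onto arbitrary subspaces of matrices -/

/-- Matrices as vectors in the Euclidean space of entries (trace inner product). -/
def toELin : Matrix (Fin p) (Fin p) ℝ →ₗ[ℝ] EuclideanSpace ℝ (Fin p × Fin p) where
  toFun M := WithLp.toLp 2 (fun q : Fin p × Fin p => M q.1 q.2)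
  map_add' _ _ := rfl
  map_smul' _ _ := rfl

/-- Orthogonal projection (trace inner product) onto a subspace of matrices. -/
def matProj (T : Submodule ℝ (Matrix (Fin p) (Fin p) ℝ)) (N : Matrix (Fin p) (Fin p) ℝ) :
    Matrix (Fin p) (Fin p) ℝ :=
  Matrix.of fun i j => ((T.map toELin).orthogonalProjectionOnto (toELin N) : EuclideanSpace ℝ (Fin p × Fin p)) (i, j)

/-- `ρ(T₁,T₂)` for arbitrary subspaces of matrices. -/
def rhoSub (T₁ T₂ : Submodule ℝ (Matrix (Fin p) (Fin p) ℝ)) : ℝ :=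
  ⨆ N : {N : Matrix (Fin p) (Fin p) ℝ // specNorm N ≤ 1},
    specNorm (matProj T₁ N.1 - matProj T₂ N.1)

/-- `ξ(T)` for an arbitrary subspace of matrices. -/
def xiSub (T : Submodule ℝ (Matrix (Fin p) (Fin p) ℝ)) : ℝ :=
  ⨆ N : {N : Matrix (Fin p) (Fin p) ℝ // N ∈ T ∧ specNorm N ≤ 1}, maxNorm N.1

/-! ### The dual norm g_γ -/

/-- `g_γ(S,L) = max(‖S‖_∞/γ, ‖L‖₂)`. -/
def gNorm (γ : ℝ) (S L : Matrix (Fin p) (Fin p) ℝ) : ℝ :=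
  max (maxNorm S / γ) (specNorm L)

/-- `g_γ(𝒜†(M)) = max(‖M‖_∞/γ, ‖M‖₂)`. -/
def gA (γ : ℝ) (M : Matrix (Fin p) (Fin p) ℝ) : ℝ :=
  max (maxNorm M / γ) (specNorm M)

/-! ### Latent-variable Fisher information setup -/

/-- `S* = K*_O`. -/
def Sstar (K : Matrix (Fin p ⊕ Fin h) (Fin p ⊕ Fin h) ℝ) : Matrix (Fin p) (Fin p) ℝ :=
  K.toBlocks₁₁

/-- `L* = K*_{O,H} (K*_H)⁻¹ K*_{H,O}`. -/
def Lstar (K : Matrix (Fin p ⊕ Fin h) (Fin p ⊕ Fin h) ℝ) : Matrix (Fin p) (Fin p) ℝ :=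
  K.toBlocks₁₂ * (K.toBlocks₂₂)⁻¹ * K.toBlocks₂₁

/-- `K̃*_O = S* − L*` (Schur complement). -/
def KtildeO (K : Matrix (Fin p ⊕ Fin h) (Fin p ⊕ Fin h) ℝ) : Matrix (Fin p) (Fin p) ℝ :=
  Sstar K - Lstar K

/-- `Σ*_O = (K̃*_O)⁻¹`. -/
def SigmaO (K : Matrix (Fin p ⊕ Fin h) (Fin p ⊕ Fin h) ℝ) : Matrix (Fin p) (Fin p) ℝ :=
  (KtildeO K)⁻¹

/-- `ψ = ‖Σ*_O‖₂`. -/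
def psi (K : Matrix (Fin p ⊕ Fin h) (Fin p ⊕ Fin h) ℝ) : ℝ :=
  specNorm (SigmaO K)

/-- Fisher information operator `ℐ*(M) = Σ*_O M Σ*_O`. -/
def Istar (K : Matrix (Fin p ⊕ Fin h) (Fin p ⊕ Fin h) ℝ) (M : Matrix (Fin p) (Fin p) ℝ) :
    Matrix (Fin p) (Fin p) ℝ :=
  SigmaO K * M * SigmaO K

/-- A nearby tangent space: `T' = T(M')` for a symmetric `M'` with the same rank as `Lst`
and `ρ(T',T(Lst)) ≤ ξ(T(Lst))/2`. -/
def Nearby (Lst M' : Matrix (Fin p) (Fin p) ℝ) : Prop :=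
  M'.IsHermitian ∧ M'.rank = Lst.rank ∧ rhoSym M' Lst ≤ xiT Lst / 2

/-- `α_Ω`. -/
def alphaOmega (K : Matrix (Fin p ⊕ Fin h) (Fin p ⊕ Fin h) ℝ) : ℝ :=
  ⨅ M : {M : Matrix (Fin p) (Fin p) ℝ // M ∈ OmegaSet (Sstar K) ∧ maxNorm M = 1},
    maxNorm (projOmega (Sstar K) (Istar K (projOmega (Sstar K) M.1)))

/-- `δ_Ω`. -/
def deltaOmega (K : Matrix (Fin p ⊕ Fin h) (Fin p ⊕ Fin h) ℝ) : ℝ :=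
  ⨆ M : {M : Matrix (Fin p) (Fin p) ℝ // M ∈ OmegaSet (Sstar K) ∧ maxNorm M = 1},
    maxNorm (projOmegaPerp (Sstar K) (Istar K (projOmega (Sstar K) M.1)))

/-- `β_Ω`. -/
def betaOmega (K : Matrix (Fin p ⊕ Fin h) (Fin p ⊕ Fin h) ℝ) : ℝ :=
  ⨆ M : {M : Matrix (Fin p) (Fin p) ℝ // M ∈ OmegaSet (Sstar K) ∧ specNorm M = 1},
    specNorm (Istar K M.1)

/-- `α_T`. -/
def alphaTC (K : Matrix (Fin p ⊕ Fin h) (Fin p ⊕ Fin h) ℝ) : ℝ :=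
  ⨅ x : {x : Matrix (Fin p) (Fin p) ℝ × Matrix (Fin p) (Fin p) ℝ //
      Nearby (Lstar K) x.1 ∧ x.2 ∈ TsetSym x.1 ∧ specNorm x.2 = 1},
    specNorm (projTsym x.1.1 (Istar K (projTsym x.1.1 x.1.2)))

/-- `δ_T`. -/
def deltaTC (K : Matrix (Fin p ⊕ Fin h) (Fin p ⊕ Fin h) ℝ) : ℝ :=
  ⨆ x : {x : Matrix (Fin p) (Fin p) ℝ × Matrix (Fin p) (Fin p) ℝ //
      Nearby (Lstar K) x.1 ∧ x.2 ∈ TsetSym x.1 ∧ specNorm x.2 = 1},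
    specNorm (projTsymPerp x.1.1 (Istar K (projTsym x.1.1 x.1.2)))

/-- `β_T`. -/
def betaTC (K : Matrix (Fin p ⊕ Fin h) (Fin p ⊕ Fin h) ℝ) : ℝ :=
  ⨆ x : {x : Matrix (Fin p) (Fin p) ℝ × Matrix (Fin p) (Fin p) ℝ //
      Nearby (Lstar K) x.1 ∧ x.2 ∈ TsetSym x.1 ∧ maxNorm x.2 = 1},
    maxNorm (Istar K x.1.2)

/-- `α = min(α_Ω, α_T)`. -/
def alphaC (K : Matrix (Fin p ⊕ Fin h) (Fin p ⊕ Fin h) ℝ) : ℝ :=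
  min (alphaOmega K) (alphaTC K)

/-- `δ = max(δ_Ω, δ_T)`. -/
def deltaC (K : Matrix (Fin p ⊕ Fin h) (Fin p ⊕ Fin h) ℝ) : ℝ :=
  max (deltaOmega K) (deltaTC K)

/-- `β = max(β_Ω, β_T)`. -/
def betaC (K : Matrix (Fin p ⊕ Fin h) (Fin p ⊕ Fin h) ℝ) : ℝ :=
  max (betaOmega K) (betaTC K)

/-- The positive semidefinite square root of a positive semidefinite real matrix
(the former Mathlib `Matrix.PosSemidef.sqrt`). -/
def _root_.Matrix.PosSemidef.sqrt {n : Type*} [Fintype n] [DecidableEq n]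
    {A : Matrix n n ℝ} (hA : A.PosSemidef) : Matrix n n ℝ :=
  hA.1.eigenvectorUnitary.1 * Matrix.diagonal (fun i => Real.sqrt (hA.1.eigenvalues i)) *
    (star hA.1.eigenvectorUnitary : Matrix n n ℝ)

/-! ### Probability: iid Gaussian samples and sample covariance -/

/-- The joint law of `n` i.i.d. samples from `N(0, S)` on `ℝ^p`, realized by pushing forward
i.i.d. standard Gaussians through the positive-semidefinite square root of `S`. -/
def iidGaussian (n p : ℕ) (S : Matrix (Fin p) (Fin p) ℝ) : Measure (Fin n → Fin p → ℝ) :=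
  if hS : S.PosSemidef then
    (Measure.pi fun _ : Fin n => Measure.pi fun _ : Fin p =>
        ProbabilityTheory.gaussianReal 0 1).map
      (fun Z => fun i => hS.sqrt.mulVec (Z i))
  else 0

/-- Sample covariance matrix of samples `X 1, …, X n`. -/
def sampleCov {p n : ℕ} (X : Fin n → Fin p → ℝ) : Matrix (Fin p) (Fin p) ℝ :=
  (n : ℝ)⁻¹ • ∑ i, Matrix.vecMulVec (X i) (X i)

/-! ### Optimization programs -/

/-- Nuclear norm `‖M‖_*` (sum of singular values). -/
def nuclearNorm (M : Matrix (Fin p) (Fin p) ℝ) : ℝ :=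
  ((Matrix.posSemidef_conjTranspose_mul_self M).sqrt).trace

/-- Objective of the program (sdp1): `tr((S−L)Σ) − log det(S−L) + λ(γ‖S‖₁ + tr(L))`. -/
def objSDP1 (Sig : Matrix (Fin p) (Fin p) ℝ) (lam gam : ℝ)
    (S L : Matrix (Fin p) (Fin p) ℝ) : ℝ :=
  ((S - L) * Sig).trace - Real.log (S - L).det + lam * (gam * l1Norm S + L.trace)

/-- Feasibility for (sdp1): symmetric `S, L`, `S − L ≻ 0`, `L ⪰ 0`. -/
def FeasSDP1 (S L : Matrix (Fin p) (Fin p) ℝ) : Prop :=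
  S.IsHermitian ∧ L.IsHermitian ∧ (S - L).PosDef ∧ L.PosSemidef

/-- `(S,L)` is an optimum of the program (sdp1). -/
def IsOptSDP1 (Sig : Matrix (Fin p) (Fin p) ℝ) (lam gam : ℝ)
    (S L : Matrix (Fin p) (Fin p) ℝ) : Prop :=
  FeasSDP1 S L ∧ ∀ S' L', FeasSDP1 S' L' →
    objSDP1 Sig lam gam S L ≤ objSDP1 Sig lam gam S' L'

/-- Objective with the nuclear norm: `tr((S−L)Σ) − log det(S−L) + λ(γ‖S‖₁ + ‖L‖_*)`. -/
def objNuc (Sig : Matrix (Fin p) (Fin p) ℝ) (lam gam : ℝ)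
    (S L : Matrix (Fin p) (Fin p) ℝ) : ℝ :=
  ((S - L) * Sig).trace - Real.log (S - L).det + lam * (gam * l1Norm S + nuclearNorm L)

/-- Feasibility for the tangent-space constrained program: symmetric, `S ∈ Ω(Sst)`,
`L ∈ T(M')`, `S − L ≻ 0`. -/
def FeasTS (Sst M' : Matrix (Fin p) (Fin p) ℝ) (S L : Matrix (Fin p) (Fin p) ℝ) : Prop :=
  S.IsHermitian ∧ S ∈ OmegaSet Sst ∧ L ∈ TsetSym M' ∧ (S - L).PosDef

/-- Optimality for the tangent-space constrained program. -/
def IsOptTS (Sst M' Sig : Matrix (Fin p) (Fin p) ℝ) (lam gam : ℝ)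
    (S L : Matrix (Fin p) (Fin p) ℝ) : Prop :=
  FeasTS Sst M' S L ∧ ∀ S' L', FeasTS Sst M' S' L' →
    objNuc Sig lam gam S L ≤ objNuc Sig lam gam S' L'

/-- Feasibility for the unconstrained nuclear-norm program: symmetric, `S − L ≻ 0`. -/
def FeasSy (S L : Matrix (Fin p) (Fin p) ℝ) : Prop :=
  S.IsHermitian ∧ L.IsHermitian ∧ (S - L).PosDef

/-- Optimality for the unconstrained nuclear-norm program. -/
def IsOptSy (Sig : Matrix (Fin p) (Fin p) ℝ) (lam gam : ℝ)
    (S L : Matrix (Fin p) (Fin p) ℝ) : Prop :=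
  FeasSy S L ∧ ∀ S' L', FeasSy S' L' →
    objNuc Sig lam gam S L ≤ objNuc Sig lam gam S' L'

/-! ### Spectral projectors and inertia -/

/-- Orthogonal projection onto the direct sum of the eigenspaces of a symmetric matrix `A`
corresponding to eigenvalues of magnitude less than `η`. -/
def spectralProjLT (A : Matrix (Fin p) (Fin p) ℝ) (η : ℝ) : Matrix (Fin p) (Fin p) ℝ :=
  if hA : A.IsHermitian then
    ∑ i ∈ Finset.univ.filter (fun i => |hA.eigenvalues i| < η),
      Matrix.vecMulVec (fun j => hA.eigenvectorBasis i j) (fun j => hA.eigenvectorBasis i j)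
  else 0

/-- `t` is an eigenvalue of `A`. -/
def hasEigval (A : Matrix (Fin p) (Fin p) ℝ) (t : ℝ) : Prop :=
  ∃ v : Fin p → ℝ, v ≠ 0 ∧ A.mulVec v = t • v

/-- Inertia (numbers of positive, negative, and zero eigenvalues) of a symmetric matrix. -/
def inertia (M : Matrix (Fin p) (Fin p) ℝ) : ℕ × ℕ × ℕ :=
  if hM : M.IsHermitian then
    ((Finset.univ.filter fun i => 0 < hM.eigenvalues i).card,
     (Finset.univ.filter fun i => hM.eigenvalues i < 0).card,
     (Finset.univ.filter fun i => hM.eigenvalues i = 0).card)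
  else (0, 0, 0)

lemma specNorm_nonneg (M : Matrix (Fin p) (Fin p) ℝ) : 0 ≤ specNorm M := norm_nonneg _

lemma specNorm_add_le (A B : Matrix (Fin p) (Fin p) ℝ) :
    specNorm (A + B) ≤ specNorm A + specNorm B := by
  unfold specNorm; rw [map_add]; exact norm_add_le _ _

lemma specNorm_mul_le (A B : Matrix (Fin p) (Fin p) ℝ) :
    specNorm (A * B) ≤ specNorm A * specNorm B := by
  unfold specNorm; rw [_root_.map_mul]; exact norm_mul_le _ _

lemma specNorm_smul (c : ℝ) (A : Matrix (Fin p) (Fin p) ℝ) :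
    specNorm (c • A) = |c| * specNorm A := by
  unfold specNorm
  rw [_root_.map_smul]
  have := norm_smul c (Matrix.toEuclideanCLM (𝕜 := ℝ) A)
  simpa using this

lemma specNorm_neg (A : Matrix (Fin p) (Fin p) ℝ) : specNorm (-A) = specNorm A := by
  unfold specNorm; rw [map_neg, norm_neg]

lemma specNorm_eq_zero {M : Matrix (Fin p) (Fin p) ℝ} (hM : specNorm M = 0) : M = 0 := by
  have h0 : Matrix.toEuclideanCLM (𝕜 := ℝ) M = 0 := norm_eq_zero.mp hM
  have := congrArg ((Matrix.toEuclideanCLM (𝕜 := ℝ))).symm h0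
  simpa using this

lemma specNorm_zero : specNorm (0 : Matrix (Fin p) (Fin p) ℝ) = 0 := by
  unfold specNorm; rw [map_zero, norm_zero]

lemma abs_entry_le_maxNorm (M : Matrix (Fin p) (Fin p) ℝ) (i j : Fin p) :
    |M i j| ≤ maxNorm M := by
  have h1 : |M i j| ≤ ⨆ j, |M i j| :=
    le_ciSup (f := fun j => |M i j|) (Set.Finite.bddAbove (Set.finite_range _)) j
  exact h1.trans (le_ciSup (f := fun i => ⨆ j, |M i j|)
    (Set.Finite.bddAbove (Set.finite_range _)) i)

lemma maxNorm_nonneg (M : Matrix (Fin p) (Fin p) ℝ) : 0 ≤ maxNorm M :=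
  Real.iSup_nonneg fun _ => Real.iSup_nonneg fun _ => abs_nonneg _

lemma maxNorm_le {M : Matrix (Fin p) (Fin p) ℝ} {c : ℝ} (hc : 0 ≤ c)
    (h : ∀ i j, |M i j| ≤ c) : maxNorm M ≤ c :=
  Real.iSup_le (fun i => Real.iSup_le (fun j => h i j) hc) hc

lemma maxNorm_add_le (A B : Matrix (Fin p) (Fin p) ℝ) :
    maxNorm (A + B) ≤ maxNorm A + maxNorm B := by
  refine maxNorm_le (add_nonneg (maxNorm_nonneg A) (maxNorm_nonneg B)) fun i j => ?_
  calc |(A + B) i j| ≤ |A i j| + |B i j| := abs_add_le _ _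
    _ ≤ _ := add_le_add (abs_entry_le_maxNorm A i j) (abs_entry_le_maxNorm B i j)

lemma maxNorm_neg (A : Matrix (Fin p) (Fin p) ℝ) : maxNorm (-A) = maxNorm A := by
  unfold maxNorm; simp

lemma maxNorm_smul (c : ℝ) (A : Matrix (Fin p) (Fin p) ℝ) :
    maxNorm (c • A) = |c| * maxNorm A := by
  rcases eq_or_ne c 0 with rfl | hc
  · simp [maxNorm]
  · have hcpos : (0:ℝ) < |c| := abs_pos.mpr hc
    apply le_antisymm
    · refine maxNorm_le (mul_nonneg (abs_nonneg c) (maxNorm_nonneg A)) fun i j => ?_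
      simp only [Matrix.smul_apply, smul_eq_mul, abs_mul]
      exact mul_le_mul_of_nonneg_left (abs_entry_le_maxNorm A i j) (abs_nonneg c)
    · rw [← le_div_iff₀' hcpos]
      refine maxNorm_le (div_nonneg (maxNorm_nonneg _) hcpos.le) fun i j => ?_
      rw [le_div_iff₀' hcpos]
      have := abs_entry_le_maxNorm (c • A) i j
      simpa [abs_mul] using this

lemma maxNorm_zero : maxNorm (0 : Matrix (Fin p) (Fin p) ℝ) = 0 :=
  le_antisymm (maxNorm_le le_rfl (by intro i j; simp)) (maxNorm_nonneg _)

lemma maxNorm_eq_zero {M : Matrix (Fin p) (Fin p) ℝ} (hM : maxNorm M = 0) : M = 0 := by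
  ext i j
  have h := abs_entry_le_maxNorm M i j
  rw [hM] at h
  simpa using abs_nonpos_iff.mp h

lemma maxNorm_sub_le' (A B : Matrix (Fin p) (Fin p) ℝ) :
    maxNorm A - maxNorm B ≤ maxNorm (A + B) := by
  have : maxNorm A ≤ maxNorm (A + B) + maxNorm B := by
    have h := maxNorm_add_le (A + B) (-B)
    simpa [maxNorm_neg] using h
  linarith

lemma specNorm_sub_le' (A B : Matrix (Fin p) (Fin p) ℝ) :
    specNorm A - specNorm B ≤ specNorm (A + B) := by
  have : specNorm A ≤ specNorm (A + B) + specNorm B := by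
    have h := specNorm_add_le (A + B) (-B)
    simpa [specNorm_neg] using h
  linarith


lemma abs_coord_le_norm (x : EuclideanSpace ℝ (Fin p)) (i : Fin p) : |x i| ≤ ‖x‖ := by
  rw [EuclideanSpace.norm_eq, ← Real.sqrt_sq_eq_abs]
  apply Real.sqrt_le_sqrt
  have hx : x i ^2 = ‖x i‖^2 := by simp [Real.norm_eq_abs, sq_abs]
  rw [hx]
  exact Finset.single_le_sum (f := fun j => ‖x j‖^2) (fun j _ => sq_nonneg _) (Finset.mem_univ i)

lemma norm_le_of_coords (x : EuclideanSpace ℝ (Fin p)) {c : ℝ} (hc : 0 ≤ c)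
    (h : ∀ i, |x i| ≤ c) : ‖x‖ ≤ p * c := by
  rw [EuclideanSpace.norm_eq]
  have h2 : Real.sqrt (∑ j, ‖x j‖^2) ≤ Real.sqrt (p * c^2) := by
    apply Real.sqrt_le_sqrt
    calc ∑ j, ‖x j‖^2 ≤ ∑ _j : Fin p, c^2 := by
          apply Finset.sum_le_sum
          intro j _
          have := h j
          rw [Real.norm_eq_abs]
          nlinarith [abs_nonneg (x j)]
      _ = p * c^2 := by simp [mul_comm]
  refine h2.trans ?_
  rw [Real.sqrt_mul (by positivity), Real.sqrt_sq hc]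
  have hp : Real.sqrt p ≤ p := by
    calc Real.sqrt p ≤ Real.sqrt ((p:ℝ)^2) := by
          apply Real.sqrt_le_sqrt
          have : p ≤ p^2 := Nat.le_self_pow two_ne_zero p
          exact_mod_cast this
      _ = p := Real.sqrt_sq (by positivity)
  nlinarith [Real.sqrt_nonneg (p:ℝ)]

lemma toCLM_apply_coord (M : Matrix (Fin p) (Fin p) ℝ) (x : EuclideanSpace ℝ (Fin p))
    (i : Fin p) : (Matrix.toEuclideanCLM (𝕜 := ℝ) M x) i = M.mulVec x i := rfl

lemma maxNorm_le_specNorm (M : Matrix (Fin p) (Fin p) ℝ) : maxNorm M ≤ specNorm M := by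
  refine maxNorm_le (specNorm_nonneg M) fun i j => ?_
  set x : EuclideanSpace ℝ (Fin p) := EuclideanSpace.single j 1 with hxdef
  have hx : ‖x‖ = 1 := by simp [hxdef, EuclideanSpace.norm_single]
  have happ : (Matrix.toEuclideanCLM (𝕜 := ℝ) M x) i = M i j := by
    rw [toCLM_apply_coord]
    show ∑ k, M i k * x k = M i j
    rw [Finset.sum_eq_single j]
    · simp [hxdef, EuclideanSpace.single_apply]
    · intro k _ hk
      simp [hxdef, EuclideanSpace.single_apply, hk]
    · simp
  calc |M i j| = |(Matrix.toEuclideanCLM (𝕜 := ℝ) M x) i| := by rw [happ]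
    _ ≤ ‖Matrix.toEuclideanCLM (𝕜 := ℝ) M x‖ := abs_coord_le_norm _ i
    _ ≤ ‖Matrix.toEuclideanCLM (𝕜 := ℝ) M‖ * ‖x‖ := ContinuousLinearMap.le_opNorm _ _
    _ = specNorm M := by rw [hx, mul_one]; rfl

lemma specNorm_le_card_maxNorm (M : Matrix (Fin p) (Fin p) ℝ) :
    specNorm M ≤ (p^2 : ℝ) * maxNorm M := by
  refine ContinuousLinearMap.opNorm_le_bound _
    (mul_nonneg (by positivity) (maxNorm_nonneg M)) fun x => ?_
  have key : ∀ i, |(Matrix.toEuclideanCLM (𝕜 := ℝ) M x) i| ≤ maxNorm M * (p * ‖x‖) := by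
    intro i
    rw [toCLM_apply_coord]
    show |∑ k, M i k * x k| ≤ _
    calc |∑ k, M i k * x k| ≤ ∑ k, |M i k * x k| := Finset.abs_sum_le_sum_abs _ _
      _ ≤ ∑ _k : Fin p, maxNorm M * ‖x‖ := by
          apply Finset.sum_le_sum
          intro k _
          rw [abs_mul]
          exact mul_le_mul (abs_entry_le_maxNorm M i k) (abs_coord_le_norm x k)
            (abs_nonneg _) (maxNorm_nonneg M)
      _ = maxNorm M * (p * ‖x‖) := by
          simp [Finset.sum_const]; ring
  have := norm_le_of_coords (Matrix.toEuclideanCLM (𝕜 := ℝ) M x)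
    (mul_nonneg (maxNorm_nonneg M) (mul_nonneg (by positivity) (norm_nonneg _))) key
  calc ‖Matrix.toEuclideanCLM (𝕜 := ℝ) M x‖ ≤ p * (maxNorm M * (p * ‖x‖)) := this
    _ = (p^2 : ℝ) * maxNorm M * ‖x‖ := by ring


lemma colProj_apply (M : Matrix (Fin p) (Fin p) ℝ) (i j : Fin p) :
    colProj M i j = ((LinearMap.range (Matrix.toEuclideanLin M)).orthogonalProjectionOnto
      (EuclideanSpace.single j 1) : EuclideanSpace ℝ (Fin p)) i := by
  rw [colProj, LinearMap.toMatrix_apply]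
  rw [OrthonormalBasis.coe_toBasis_repr_apply, EuclideanSpace.basisFun_repr]
  rw [OrthonormalBasis.coe_toBasis, EuclideanSpace.basisFun_apply]
  rfl

lemma colProj_isHermitian (M : Matrix (Fin p) (Fin p) ℝ) : (colProj M).IsHermitian := by
  ext i j
  rw [Matrix.conjTranspose_apply]
  rw [colProj_apply, colProj_apply]
  have coord : ∀ (w : EuclideanSpace ℝ (Fin p)) (k : Fin p),
      w k = @inner ℝ _ _ (EuclideanSpace.single k (1:ℝ)) w := by
    intro w k
    rw [EuclideanSpace.inner_single_left]
    simp
  set U := LinearMap.range (Matrix.toEuclideanLin M)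
  show ((U.orthogonalProjectionOnto (EuclideanSpace.single i 1) : EuclideanSpace ℝ (Fin p)) j)
      = (U.orthogonalProjectionOnto (EuclideanSpace.single j 1) : EuclideanSpace ℝ (Fin p)) i
  rw [coord ((U.orthogonalProjectionOnto (EuclideanSpace.single i 1) : EuclideanSpace ℝ (Fin p))) j,
    coord ((U.orthogonalProjectionOnto (EuclideanSpace.single j 1) : EuclideanSpace ℝ (Fin p))) i]
  rw [← Submodule.starProjection_apply, ← Submodule.starProjection_apply,
    ← Submodule.inner_starProjection_left_eq_right]
  rw [real_inner_comm]


lemma colProj_mul_self (M : Matrix (Fin p) (Fin p) ℝ) :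
    colProj M * colProj M = colProj M := by
  unfold colProj
  rw [← LinearMap.toMatrix_comp]
  congr 1
  apply LinearMap.ext
  intro x
  simp [LinearMap.comp_apply, Submodule.orthogonalProjectionOnto_mem_subspace_eq_self]
  exact Submodule.starProjection_eq_self_iff.mpr (by rw [Submodule.starProjection_apply]; exact Submodule.coe_mem _)

lemma specNorm_le_one_of_proj {Q : Matrix (Fin p) (Fin p) ℝ}
    (h1 : Q * Q = Q) (h2 : Q.IsHermitian) : specNorm Q ≤ 1 := by
  refine ContinuousLinearMap.opNorm_le_bound _ zero_le_one fun x => ?_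
  rw [one_mul]
  set T := Matrix.toEuclideanCLM (𝕜 := ℝ) Q with hT
  have hsym : (Matrix.toEuclideanLin Q).IsSymmetric :=
    Matrix.isHermitian_iff_isSymmetric.mp h2
  have hTT : T (T x) = T x := by
    have : T * T = T := by rw [hT, ← _root_.map_mul, h1]
    calc T (T x) = (T * T) x := rfl
      _ = T x := by rw [this]
  have hinner : @inner ℝ _ _ (T x) (T x) = @inner ℝ _ _ x (T x) := by
    calc @inner ℝ _ _ (T x) (T x) = @inner ℝ _ _ x (T (T x)) := hsym x (T x)
      _ = @inner ℝ _ _ x (T x) := by rw [hTT]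
  have h3 : ‖T x‖^2 ≤ ‖x‖ * ‖T x‖ := by
    rw [← real_inner_self_eq_norm_sq]
    rw [hinner]
    exact real_inner_le_norm x (T x)
  rcases eq_or_lt_of_le (norm_nonneg (T x)) with h4 | h4
  · rw [← h4]; exact norm_nonneg x
  · nlinarith

lemma specNorm_colProj_le_one (M : Matrix (Fin p) (Fin p) ℝ) : specNorm (colProj M) ≤ 1 :=
  specNorm_le_one_of_proj (colProj_mul_self M) (colProj_isHermitian M)

lemma specNorm_one_sub_colProj_le_one (M : Matrix (Fin p) (Fin p) ℝ) :
    specNorm (1 - colProj M) ≤ 1 := by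
  refine specNorm_le_one_of_proj ?_ ?_
  · rw [sub_mul, mul_sub, mul_sub, one_mul, mul_one, colProj_mul_self]; noncomm_ring
  · unfold Matrix.IsHermitian
    rw [Matrix.conjTranspose_sub, Matrix.conjTranspose_one, (colProj_isHermitian M).eq]

lemma specNorm_projTsym_le (M N : Matrix (Fin p) (Fin p) ℝ) :
    specNorm (projTsym M N) ≤ 2 * specNorm N := by
  have hsplit : projTsym M N = colProj M * N + (1 - colProj M) * (N * colProj M) := by
    unfold projTsym; noncomm_ring
  rw [hsplit]
  have h1 : specNorm (colProj M * N) ≤ 1 * specNorm N :=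
    (specNorm_mul_le _ _).trans
      (mul_le_mul_of_nonneg_right (specNorm_colProj_le_one M) (specNorm_nonneg N))
  have h2 : specNorm ((1 - colProj M) * (N * colProj M)) ≤ specNorm N := by
    calc specNorm ((1 - colProj M) * (N * colProj M))
        ≤ specNorm (1 - colProj M) * specNorm (N * colProj M) := specNorm_mul_le _ _
      _ ≤ 1 * specNorm (N * colProj M) :=
          mul_le_mul_of_nonneg_right (specNorm_one_sub_colProj_le_one M) (specNorm_nonneg _)
      _ = specNorm (N * colProj M) := one_mul _
      _ ≤ specNorm N * specNorm (colProj M) := specNorm_mul_le _ _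
      _ ≤ specNorm N * 1 :=
          mul_le_mul_of_nonneg_left (specNorm_colProj_le_one M) (specNorm_nonneg N)
      _ = specNorm N := mul_one _
  calc specNorm (colProj M * N + (1 - colProj M) * (N * colProj M))
      ≤ specNorm (colProj M * N) + specNorm ((1 - colProj M) * (N * colProj M)) :=
        specNorm_add_le _ _
    _ ≤ 1 * specNorm N + specNorm N := add_le_add h1 h2
    _ = 2 * specNorm N := by ring

lemma projTsym_eq_self {M N : Matrix (Fin p) (Fin p) ℝ} (hN : N ∈ TsetSym M) :
    projTsym M N = N := by
  have hexp : N - projTsym M N = projTsymPerp M N := by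
    unfold projTsym projTsymPerp; noncomm_ring
  have := hN.2
  rw [← hexp] at this
  exact (sub_eq_zero.mp this).symm

lemma projTsym_isHermitian {N : Matrix (Fin p) (Fin p) ℝ} (M : Matrix (Fin p) (Fin p) ℝ)
    (hN : N.IsHermitian) : (projTsym M N).IsHermitian := by
  unfold Matrix.IsHermitian projTsym
  rw [Matrix.conjTranspose_sub, Matrix.conjTranspose_add]
  simp only [Matrix.conjTranspose_mul, (colProj_isHermitian M).eq, hN.eq]
  noncomm_ring

lemma projTsym_mem {N : Matrix (Fin p) (Fin p) ℝ} (M : Matrix (Fin p) (Fin p) ℝ)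
    (hN : N.IsHermitian) : projTsym M N ∈ TsetSym M := by
  refine ⟨projTsym_isHermitian M hN, ?_⟩
  set P := colProj M with hP
  have h0 : (1 - P) * P = 0 := by
    rw [sub_mul, one_mul, hP, colProj_mul_self, sub_self]
  have h0' : P * (1 - P) = 0 := by
    rw [mul_sub, mul_one, hP, colProj_mul_self, sub_self]
  show (1 - P) * (P * N + N * P - P * N * P) * (1 - P) = 0
  have hsplit : (1 - P) * (P * N + N * P - P * N * P) * (1 - P)
      = ((1 - P) * P) * (N * (1 - P)) + ((1 - P) * N) * (P * (1 - P))
        - ((1 - P) * P) * ((N * P) * (1 - P)) := by noncomm_ring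
  rw [hsplit, h0, h0', zero_mul, mul_zero, zero_mul, sub_zero, add_zero]

lemma TsetSym_smul {M N : Matrix (Fin p) (Fin p) ℝ} (hN : N ∈ TsetSym M) (c : ℝ) :
    c • N ∈ TsetSym M := by
  constructor
  · unfold Matrix.IsHermitian
    rw [Matrix.conjTranspose_smul, hN.1.eq]
    simp
  · show (1 - colProj M) * (c • N) * (1 - colProj M) = 0
    have hh : (1 - colProj M) * (c • N) * (1 - colProj M)
        = c • ((1 - colProj M) * N * (1 - colProj M)) := by
      rw [mul_smul_comm, smul_mul_assoc]
    rw [hh, show (1 - colProj M) * N * (1 - colProj M) = 0 from hN.2, smul_zero]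

lemma projTsym_add (M A B : Matrix (Fin p) (Fin p) ℝ) :
    projTsym M (A + B) = projTsym M A + projTsym M B := by
  unfold projTsym; noncomm_ring

lemma projTsym_smul (M A : Matrix (Fin p) (Fin p) ℝ) (c : ℝ) :
    projTsym M (c • A) = c • projTsym M A := by
  unfold projTsym
  simp [mul_smul_comm, smul_mul_assoc, smul_add, smul_sub]

lemma projTsym_sub (M A B : Matrix (Fin p) (Fin p) ℝ) :
    projTsym M (A - B) = projTsym M A - projTsym M B := by
  unfold projTsym; noncomm_ring

lemma projOmega_eq_self {M₀ N : Matrix (Fin p) (Fin p) ℝ} (hN : N ∈ OmegaSet M₀) :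
    projOmega M₀ N = N := by
  ext i j
  show (if M₀ i j = 0 then 0 else N i j) = N i j
  split
  · rename_i hz; rw [hN i j hz]
  · rfl

lemma projOmega_add (M₀ A B : Matrix (Fin p) (Fin p) ℝ) :
    projOmega M₀ (A + B) = projOmega M₀ A + projOmega M₀ B := by
  ext i j
  show (if M₀ i j = 0 then 0 else (A i j + B i j)) = (if M₀ i j = 0 then 0 else A i j) + (if M₀ i j = 0 then 0 else B i j)
  split <;> simp

lemma projOmega_smul (M₀ A : Matrix (Fin p) (Fin p) ℝ) (c : ℝ) :
    projOmega M₀ (c • A) = c • projOmega M₀ A := by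
  ext i j
  show (if M₀ i j = 0 then 0 else c * A i j) = c * (if M₀ i j = 0 then 0 else A i j)
  split <;> simp

lemma OmegaSet_smul {M₀ N : Matrix (Fin p) (Fin p) ℝ} (hN : N ∈ OmegaSet M₀) (c : ℝ) :
    c • N ∈ OmegaSet M₀ := by
  intro i j hz
  show c * N i j = 0
  rw [hN i j hz, mul_zero]

lemma maxNorm_projOmega_le (M₀ N : Matrix (Fin p) (Fin p) ℝ) :
    maxNorm (projOmega M₀ N) ≤ maxNorm N := by
  refine maxNorm_le (maxNorm_nonneg N) fun i j => ?_
  show |if M₀ i j = 0 then 0 else N i j| ≤ _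
  split
  · simpa using maxNorm_nonneg N
  · exact abs_entry_le_maxNorm N i j


variable (K : Matrix (Fin p ⊕ Fin h) (Fin p ⊕ Fin h) ℝ)

lemma Istar_zero : Istar K (0 : Matrix (Fin p) (Fin p) ℝ) = 0 := by
  unfold Istar; rw [Matrix.mul_zero, Matrix.zero_mul]

lemma Istar_add (A B : Matrix (Fin p) (Fin p) ℝ) :
    Istar K (A + B) = Istar K A + Istar K B := by
  unfold Istar; noncomm_ring

lemma Istar_smul (c : ℝ) (A : Matrix (Fin p) (Fin p) ℝ) :
    Istar K (c • A) = c • Istar K A := by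
  unfold Istar; rw [mul_smul_comm, smul_mul_assoc]

lemma Istar_spec_le (A : Matrix (Fin p) (Fin p) ℝ) :
    specNorm (Istar K A) ≤ psi K ^ 2 * specNorm A := by
  unfold Istar psi
  calc specNorm (SigmaO K * A * SigmaO K)
      ≤ specNorm (SigmaO K * A) * specNorm (SigmaO K) := specNorm_mul_le _ _
    _ ≤ (specNorm (SigmaO K) * specNorm A) * specNorm (SigmaO K) :=
        mul_le_mul_of_nonneg_right (specNorm_mul_le _ _) (specNorm_nonneg _)
    _ = specNorm (SigmaO K) ^ 2 * specNorm A := by ring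

lemma betaOmega_nonneg : 0 ≤ betaOmega K :=
  Real.iSup_nonneg fun _ => specNorm_nonneg _

lemma betaTC_nonneg : 0 ≤ betaTC K :=
  Real.iSup_nonneg fun _ => maxNorm_nonneg _

lemma betaC_nonneg : 0 ≤ betaC K := (betaOmega_nonneg K).trans (le_max_left _ _)

lemma muOmega_nonneg (M₀ : Matrix (Fin p) (Fin p) ℝ) : 0 ≤ muOmega M₀ :=
  Real.iSup_nonneg fun _ => specNorm_nonneg _

lemma xiT_nonneg (M : Matrix (Fin p) (Fin p) ℝ) : 0 ≤ xiT M :=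
  Real.iSup_nonneg fun _ => maxNorm_nonneg _

lemma gNorm_nonneg (γ : ℝ) (S L : Matrix (Fin p) (Fin p) ℝ) : 0 ≤ gNorm γ S L :=
  (specNorm_nonneg L).trans (le_max_right _ _)

lemma alphaOmega_le {S : Matrix (Fin p) (Fin p) ℝ} (hS : S ∈ OmegaSet (Sstar K)) :
    alphaOmega K * maxNorm S ≤ maxNorm (projOmega (Sstar K) (Istar K S)) := by
  rcases eq_or_ne (maxNorm S) 0 with hz | hz
  · rw [hz, mul_zero]; exact maxNorm_nonneg _
  · have hc : 0 < maxNorm S := lt_of_le_of_ne (maxNorm_nonneg S) (Ne.symm hz)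
    set c := maxNorm S with hcdef
    have hmem : c⁻¹ • S ∈ OmegaSet (Sstar K) := OmegaSet_smul hS _
    have hnorm : maxNorm (c⁻¹ • S) = 1 := by
      rw [maxNorm_smul, abs_of_pos (inv_pos.mpr hc), ← hcdef, inv_mul_cancel₀ hz]
    have hbb : BddBelow (Set.range fun M : {M : Matrix (Fin p) (Fin p) ℝ //
        M ∈ OmegaSet (Sstar K) ∧ maxNorm M = 1} =>
        maxNorm (projOmega (Sstar K) (Istar K (projOmega (Sstar K) M.1)))) := by
      refine ⟨0, ?_⟩
      rintro q ⟨x, rfl⟩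
      exact maxNorm_nonneg _
    have hle := ciInf_le hbb (⟨c⁻¹ • S, hmem, hnorm⟩ : {M : Matrix (Fin p) (Fin p) ℝ //
        M ∈ OmegaSet (Sstar K) ∧ maxNorm M = 1})
    rw [show ((⟨c⁻¹ • S, hmem, hnorm⟩ : {M : Matrix (Fin p) (Fin p) ℝ //
        M ∈ OmegaSet (Sstar K) ∧ maxNorm M = 1}) : {M : Matrix (Fin p) (Fin p) ℝ //
        M ∈ OmegaSet (Sstar K) ∧ maxNorm M = 1}).1 = c⁻¹ • S from rfl] at hle
    rw [projOmega_eq_self hmem, Istar_smul, projOmega_smul, maxNorm_smul,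
      abs_of_pos (inv_pos.mpr hc)] at hle
    calc alphaOmega K * c ≤ (c⁻¹ * maxNorm (projOmega (Sstar K) (Istar K S))) * c :=
          mul_le_mul_of_nonneg_right hle hc.le
      _ = maxNorm (projOmega (Sstar K) (Istar K S)) := by field_simp

lemma alphaTC_le {M' L : Matrix (Fin p) (Fin p) ℝ} (hM' : Nearby (Lstar K) M')
    (hL : L ∈ TsetSym M') :
    alphaTC K * specNorm L ≤ specNorm (projTsym M' (Istar K L)) := by
  rcases eq_or_ne (specNorm L) 0 with hz | hz
  · rw [hz, mul_zero]; exact specNorm_nonneg _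
  · have hc : 0 < specNorm L := lt_of_le_of_ne (specNorm_nonneg L) (Ne.symm hz)
    set c := specNorm L with hcdef
    have hmem : c⁻¹ • L ∈ TsetSym M' := TsetSym_smul hL _
    have hnorm : specNorm (c⁻¹ • L) = 1 := by
      rw [specNorm_smul, abs_of_pos (inv_pos.mpr hc), ← hcdef, inv_mul_cancel₀ hz]
    have hbb : BddBelow (Set.range fun x : {x : Matrix (Fin p) (Fin p) ℝ × Matrix (Fin p) (Fin p) ℝ //
        Nearby (Lstar K) x.1 ∧ x.2 ∈ TsetSym x.1 ∧ specNorm x.2 = 1} =>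
        specNorm (projTsym x.1.1 (Istar K (projTsym x.1.1 x.1.2)))) := by
      refine ⟨0, ?_⟩
      rintro q ⟨x, rfl⟩
      exact specNorm_nonneg _
    have hle := ciInf_le hbb (⟨(M', c⁻¹ • L), hM', hmem, hnorm⟩ :
      {x : Matrix (Fin p) (Fin p) ℝ × Matrix (Fin p) (Fin p) ℝ //
        Nearby (Lstar K) x.1 ∧ x.2 ∈ TsetSym x.1 ∧ specNorm x.2 = 1})
    simp only at hle
    rw [projTsym_eq_self hmem, Istar_smul, projTsym_smul, specNorm_smul,
      abs_of_pos (inv_pos.mpr hc)] at hle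
    calc alphaTC K * c ≤ (c⁻¹ * specNorm (projTsym M' (Istar K L))) * c :=
          mul_le_mul_of_nonneg_right hle hc.le
      _ = specNorm (projTsym M' (Istar K L)) := by field_simp

lemma betaOmega_le {S : Matrix (Fin p) (Fin p) ℝ} (hS : S ∈ OmegaSet (Sstar K)) :
    specNorm (Istar K S) ≤ betaOmega K * specNorm S := by
  rcases eq_or_ne (specNorm S) 0 with hz | hz
  · rw [specNorm_eq_zero hz, Istar_zero, specNorm_zero]; simp
  · have hc : 0 < specNorm S := lt_of_le_of_ne (specNorm_nonneg S) (Ne.symm hz)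
    set c := specNorm S with hcdef
    have hmem : c⁻¹ • S ∈ OmegaSet (Sstar K) := OmegaSet_smul hS _
    have hnorm : specNorm (c⁻¹ • S) = 1 := by
      rw [specNorm_smul, abs_of_pos (inv_pos.mpr hc), ← hcdef, inv_mul_cancel₀ hz]
    have hba : BddAbove (Set.range fun M : {M : Matrix (Fin p) (Fin p) ℝ //
        M ∈ OmegaSet (Sstar K) ∧ specNorm M = 1} => specNorm (Istar K M.1)) := by
      refine ⟨psi K ^ 2, ?_⟩
      rintro q ⟨x, rfl⟩
      calc specNorm (Istar K x.1) ≤ psi K ^ 2 * specNorm x.1 := Istar_spec_le K _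
        _ = psi K ^ 2 := by rw [x.2.2, mul_one]
    have hle := le_ciSup hba (⟨c⁻¹ • S, hmem, hnorm⟩ : {M : Matrix (Fin p) (Fin p) ℝ //
        M ∈ OmegaSet (Sstar K) ∧ specNorm M = 1})
    simp only at hle
    rw [Istar_smul, specNorm_smul, abs_of_pos (inv_pos.mpr hc)] at hle
    calc specNorm (Istar K S) = (c⁻¹ * specNorm (Istar K S)) * c := by field_simp
      _ ≤ betaOmega K * c := mul_le_mul_of_nonneg_right hle hc.le

lemma betaTC_le {M' L : Matrix (Fin p) (Fin p) ℝ} (hM' : Nearby (Lstar K) M')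
    (hL : L ∈ TsetSym M') :
    maxNorm (Istar K L) ≤ betaTC K * maxNorm L := by
  rcases eq_or_ne (maxNorm L) 0 with hz | hz
  · rw [maxNorm_eq_zero hz, Istar_zero, maxNorm_zero]
    simpa using mul_nonneg (betaTC_nonneg K) (maxNorm_nonneg _)
  · have hc : 0 < maxNorm L := lt_of_le_of_ne (maxNorm_nonneg L) (Ne.symm hz)
    set c := maxNorm L with hcdef
    have hmem : c⁻¹ • L ∈ TsetSym M' := TsetSym_smul hL _
    have hnorm : maxNorm (c⁻¹ • L) = 1 := by
      rw [maxNorm_smul, abs_of_pos (inv_pos.mpr hc), ← hcdef, inv_mul_cancel₀ hz]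
    have hba : BddAbove (Set.range fun x : {x : Matrix (Fin p) (Fin p) ℝ × Matrix (Fin p) (Fin p) ℝ //
        Nearby (Lstar K) x.1 ∧ x.2 ∈ TsetSym x.1 ∧ maxNorm x.2 = 1} =>
        maxNorm (Istar K x.1.2)) := by
      refine ⟨psi K ^ 2 * (p^2 : ℝ), ?_⟩
      rintro q ⟨x, rfl⟩
      calc maxNorm (Istar K x.1.2) ≤ specNorm (Istar K x.1.2) := maxNorm_le_specNorm _
        _ ≤ psi K ^ 2 * specNorm x.1.2 := Istar_spec_le K _
        _ ≤ psi K ^ 2 * ((p^2 : ℝ) * maxNorm x.1.2) :=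
            mul_le_mul_of_nonneg_left (specNorm_le_card_maxNorm _) (by positivity)
        _ = psi K ^ 2 * (p^2 : ℝ) := by rw [x.2.2.2, mul_one]
    have hle := le_ciSup hba (⟨(M', c⁻¹ • L), hM', hmem, hnorm⟩ :
      {x : Matrix (Fin p) (Fin p) ℝ × Matrix (Fin p) (Fin p) ℝ //
        Nearby (Lstar K) x.1 ∧ x.2 ∈ TsetSym x.1 ∧ maxNorm x.2 = 1})
    simp only at hle
    rw [Istar_smul, maxNorm_smul, abs_of_pos (inv_pos.mpr hc)] at hle
    calc maxNorm (Istar K L) = (c⁻¹ * maxNorm (Istar K L)) * c := by field_simp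
      _ ≤ betaTC K * c := mul_le_mul_of_nonneg_right hle hc.le

lemma muOmega_le {S : Matrix (Fin p) (Fin p) ℝ} (hS : S ∈ OmegaSet (Sstar K)) :
    specNorm S ≤ muOmega (Sstar K) * maxNorm S := by
  rcases eq_or_ne (maxNorm S) 0 with hz | hz
  · rw [maxNorm_eq_zero hz, specNorm_zero, maxNorm_zero]; simp
  · have hc : 0 < maxNorm S := lt_of_le_of_ne (maxNorm_nonneg S) (Ne.symm hz)
    set c := maxNorm S with hcdef
    have hmem : c⁻¹ • S ∈ OmegaSet (Sstar K) := OmegaSet_smul hS _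
    have hnorm : maxNorm (c⁻¹ • S) = 1 := by
      rw [maxNorm_smul, abs_of_pos (inv_pos.mpr hc), ← hcdef, inv_mul_cancel₀ hz]
    have hba : BddAbove (Set.range fun N : {N : Matrix (Fin p) (Fin p) ℝ //
        N ∈ OmegaSet (Sstar K) ∧ maxNorm N ≤ 1} => specNorm N.1) := by
      refine ⟨(p^2 : ℝ), ?_⟩
      rintro q ⟨x, rfl⟩
      calc specNorm x.1 ≤ (p^2 : ℝ) * maxNorm x.1 := specNorm_le_card_maxNorm _
        _ ≤ (p^2 : ℝ) * 1 := mul_le_mul_of_nonneg_left x.2.2 (by positivity)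
        _ = (p^2 : ℝ) := mul_one _
    have hle := le_ciSup hba (⟨c⁻¹ • S, hmem, le_of_eq hnorm⟩ : {N : Matrix (Fin p) (Fin p) ℝ //
        N ∈ OmegaSet (Sstar K) ∧ maxNorm N ≤ 1})
    simp only at hle
    rw [specNorm_smul, abs_of_pos (inv_pos.mpr hc)] at hle
    calc specNorm S = (c⁻¹ * specNorm S) * c := by field_simp
      _ ≤ muOmega (Sstar K) * c := mul_le_mul_of_nonneg_right hle hc.le

lemma xiT_le {M₀ N : Matrix (Fin p) (Fin p) ℝ} (hN : N ∈ TsetSym M₀) :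
    maxNorm N ≤ xiT M₀ * specNorm N := by
  rcases eq_or_ne (specNorm N) 0 with hz | hz
  · rw [specNorm_eq_zero hz, maxNorm_zero, specNorm_zero]; simp
  · have hc : 0 < specNorm N := lt_of_le_of_ne (specNorm_nonneg N) (Ne.symm hz)
    set c := specNorm N with hcdef
    have hmem : c⁻¹ • N ∈ TsetSym M₀ := TsetSym_smul hN _
    have hnorm : specNorm (c⁻¹ • N) = 1 := by
      rw [specNorm_smul, abs_of_pos (inv_pos.mpr hc), ← hcdef, inv_mul_cancel₀ hz]
    have hba : BddAbove (Set.range fun N : {N : Matrix (Fin p) (Fin p) ℝ //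
        N ∈ TsetSym M₀ ∧ specNorm N ≤ 1} => maxNorm N.1) := by
      refine ⟨1, ?_⟩
      rintro q ⟨x, rfl⟩
      exact (maxNorm_le_specNorm _).trans x.2.2
    have hle := le_ciSup hba (⟨c⁻¹ • N, hmem, le_of_eq hnorm⟩ : {N : Matrix (Fin p) (Fin p) ℝ //
        N ∈ TsetSym M₀ ∧ specNorm N ≤ 1})
    simp only at hle
    rw [maxNorm_smul, abs_of_pos (inv_pos.mpr hc)] at hle
    calc maxNorm N = (c⁻¹ * maxNorm N) * c := by field_simp
      _ ≤ xiT M₀ * c := mul_le_mul_of_nonneg_right hle hc.le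

lemma projTsym_zero (M : Matrix (Fin p) (Fin p) ℝ) : projTsym M 0 = 0 := by
  unfold projTsym
  simp

lemma rhoSym_le (M₁ M₂ N : Matrix (Fin p) (Fin p) ℝ) :
    specNorm (projTsym M₁ N - projTsym M₂ N) ≤ rhoSym M₁ M₂ * specNorm N := by
  rcases eq_or_ne (specNorm N) 0 with hz | hz
  · rw [specNorm_eq_zero hz, projTsym_zero, projTsym_zero, sub_zero, specNorm_zero]; simp
  · have hc : 0 < specNorm N := lt_of_le_of_ne (specNorm_nonneg N) (Ne.symm hz)
    set c := specNorm N with hcdef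
    have hnorm : specNorm (c⁻¹ • N) ≤ 1 := by
      rw [specNorm_smul, abs_of_pos (inv_pos.mpr hc), ← hcdef, inv_mul_cancel₀ hz]
    have hba : BddAbove (Set.range fun N : {N : Matrix (Fin p) (Fin p) ℝ // specNorm N ≤ 1} =>
        specNorm (projTsym M₁ N.1 - projTsym M₂ N.1)) := by
      refine ⟨4, ?_⟩
      rintro q ⟨x, rfl⟩
      have h1 : specNorm (projTsym M₁ x.1) ≤ 2 * specNorm x.1 := specNorm_projTsym_le _ _
      have h2 : specNorm (projTsym M₂ x.1) ≤ 2 * specNorm x.1 := specNorm_projTsym_le _ _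
      have h3 : specNorm (projTsym M₁ x.1 - projTsym M₂ x.1)
          ≤ specNorm (projTsym M₁ x.1) + specNorm (projTsym M₂ x.1) := by
        have := specNorm_add_le (projTsym M₁ x.1) (-(projTsym M₂ x.1))
        simpa [sub_eq_add_neg, specNorm_neg] using this
      have := x.2
      nlinarith [specNorm_nonneg x.1]
    have hle := le_ciSup hba (⟨c⁻¹ • N, hnorm⟩ : {N : Matrix (Fin p) (Fin p) ℝ // specNorm N ≤ 1})
    simp only at hle
    rw [projTsym_smul, projTsym_smul, ← smul_sub, specNorm_smul,
      abs_of_pos (inv_pos.mpr hc)] at hle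
    calc specNorm (projTsym M₁ N - projTsym M₂ N)
        = (c⁻¹ * specNorm (projTsym M₁ N - projTsym M₂ N)) * c := by field_simp
      _ ≤ rhoSym M₁ M₂ * c := mul_le_mul_of_nonneg_right hle hc.le

lemma maxNorm_le_xi_nearby {M' L : Matrix (Fin p) (Fin p) ℝ} (hM' : Nearby (Lstar K) M')
    (hL : L ∈ TsetSym M') :
    maxNorm L ≤ (5/2) * xiT (Lstar K) * specNorm L := by
  have hfix : projTsym M' L = L := projTsym_eq_self hL
  have hmem : projTsym (Lstar K) L ∈ TsetSym (Lstar K) := projTsym_mem _ hL.1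
  have h1 : maxNorm (projTsym (Lstar K) L) ≤ xiT (Lstar K) * specNorm (projTsym (Lstar K) L) :=
    xiT_le hmem
  have h2 : specNorm (projTsym (Lstar K) L) ≤ 2 * specNorm L := specNorm_projTsym_le _ _
  have h3 : specNorm (projTsym M' L - projTsym (Lstar K) L) ≤ rhoSym M' (Lstar K) * specNorm L :=
    rhoSym_le _ _ _
  have h4 : rhoSym M' (Lstar K) ≤ xiT (Lstar K) / 2 := hM'.2.2
  have hsplit : L = projTsym (Lstar K) L + (projTsym M' L - projTsym (Lstar K) L) := by
    rw [hfix]; abel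
  have h5 : maxNorm L ≤ maxNorm (projTsym (Lstar K) L)
      + maxNorm (projTsym M' L - projTsym (Lstar K) L) := by
    conv_lhs => rw [hsplit]
    exact maxNorm_add_le _ _
  have h6 : maxNorm (projTsym M' L - projTsym (Lstar K) L)
      ≤ specNorm (projTsym M' L - projTsym (Lstar K) L) := maxNorm_le_specNorm _
  have hxi : 0 ≤ xiT (Lstar K) := xiT_nonneg _
  have hsl : 0 ≤ specNorm L := specNorm_nonneg _
  have hrho : 0 ≤ rhoSym M' (Lstar K) := Real.iSup_nonneg fun _ => specNorm_nonneg _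
  nlinarith [mul_le_mul_of_nonneg_left h2 hxi, mul_le_mul_of_nonneg_right h4 hsl]

theorem key_prop (K : Matrix (Fin p ⊕ Fin h) (Fin p ⊕ Fin h) ℝ)
    (ν γ : ℝ)
    (hν : ν ∈ Set.Ioc (0 : ℝ) (1 / 2))
    (hγ : γ ∈ Set.Icc
      (3 * betaC K * (2 - ν) * xiT (Lstar K) / (ν * alphaC K))
      (ν * alphaC K / (2 * betaC K * (2 - ν) * muOmega (Sstar K)))) :
    ∀ M' : Matrix (Fin p) (Fin p) ℝ, Nearby (Lstar K) M' →
      ∀ S L : Matrix (Fin p) (Fin p) ℝ,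
        S ∈ OmegaSet (Sstar K) → L ∈ TsetSym M' →
          alphaC K / 2 * gNorm γ S L ≤
            gNorm γ (projOmega (Sstar K) (Istar K (S + L)))
              (projTsym M' (Istar K (S + L))) := by
  intro M' hM' S L hS hL
  obtain ⟨hν0, hν12⟩ := hν
  obtain ⟨hγlo, hγhi⟩ := hγ
  by_cases hαpos : 0 < alphaC K
  case neg =>
    push_neg at hαpos
    nlinarith [gNorm_nonneg γ S L,
      gNorm_nonneg γ (projOmega (Sstar K) (Istar K (S + L))) (projTsym M' (Istar K (S + L)))]
  case pos =>
  have hβ0 : 0 ≤ betaC K := betaC_nonneg K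
  have hξ0 : 0 ≤ xiT (Lstar K) := xiT_nonneg _
  have hμ0 : 0 ≤ muOmega (Sstar K) := muOmega_nonneg _
  have h2ν : (0:ℝ) < 2 - ν := by linarith
  have hνα : 0 < ν * alphaC K := mul_pos hν0 hαpos
  have hγ0 : 0 ≤ γ := le_trans (div_nonneg (by positivity) hνα.le) hγlo
  have hγlo' : 3 * betaC K * (2 - ν) * xiT (Lstar K) ≤ γ * (ν * alphaC K) :=
    (div_le_iff₀ hνα).mp hγlo
  have h5βξ : 5 * (betaC K * xiT (Lstar K)) ≤ alphaC K * γ := by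
    nlinarith [mul_nonneg hβ0 hξ0]
  have hmS0 : 0 ≤ maxNorm S := maxNorm_nonneg S
  have hsL0 : 0 ≤ specNorm L := specNorm_nonneg L
  -- main component bounds
  have hR1 : alphaC K * maxNorm S - betaC K * ((5/2) * xiT (Lstar K) * specNorm L)
      ≤ maxNorm (projOmega (Sstar K) (Istar K (S + L))) := by
    have hsum : projOmega (Sstar K) (Istar K (S + L))
        = projOmega (Sstar K) (Istar K S) + projOmega (Sstar K) (Istar K L) := by
      rw [Istar_add, projOmega_add]
    have htri : maxNorm (projOmega (Sstar K) (Istar K S))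
        - maxNorm (projOmega (Sstar K) (Istar K L))
        ≤ maxNorm (projOmega (Sstar K) (Istar K (S + L))) := by
      rw [hsum]; exact maxNorm_sub_le' _ _
    have hmain : alphaC K * maxNorm S ≤ maxNorm (projOmega (Sstar K) (Istar K S)) := by
      calc alphaC K * maxNorm S ≤ alphaOmega K * maxNorm S :=
            mul_le_mul_of_nonneg_right (min_le_left _ _) hmS0
        _ ≤ _ := alphaOmega_le K hS
    have hcross : maxNorm (projOmega (Sstar K) (Istar K L))
        ≤ betaC K * ((5/2) * xiT (Lstar K) * specNorm L) := by
      calc maxNorm (projOmega (Sstar K) (Istar K L)) ≤ maxNorm (Istar K L) :=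
            maxNorm_projOmega_le _ _
        _ ≤ betaTC K * maxNorm L := betaTC_le K hM' hL
        _ ≤ betaC K * maxNorm L :=
            mul_le_mul_of_nonneg_right (le_max_right _ _) (maxNorm_nonneg L)
        _ ≤ betaC K * ((5/2) * xiT (Lstar K) * specNorm L) :=
            mul_le_mul_of_nonneg_left (maxNorm_le_xi_nearby K hM' hL) hβ0
    linarith
  have hR2 : alphaC K * specNorm L - 2 * betaC K * (muOmega (Sstar K) * maxNorm S)
      ≤ specNorm (projTsym M' (Istar K (S + L))) := by
    have hsum : projTsym M' (Istar K (S + L))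
        = projTsym M' (Istar K L) + projTsym M' (Istar K S) := by
      rw [Istar_add, projTsym_add]; abel
    have htri : specNorm (projTsym M' (Istar K L)) - specNorm (projTsym M' (Istar K S))
        ≤ specNorm (projTsym M' (Istar K (S + L))) := by
      rw [hsum]; exact specNorm_sub_le' _ _
    have hmain : alphaC K * specNorm L ≤ specNorm (projTsym M' (Istar K L)) := by
      calc alphaC K * specNorm L ≤ alphaTC K * specNorm L :=
            mul_le_mul_of_nonneg_right (min_le_right _ _) hsL0
        _ ≤ _ := alphaTC_le K hM' hL
    have hcross : specNorm (projTsym M' (Istar K S))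
        ≤ 2 * betaC K * (muOmega (Sstar K) * maxNorm S) := by
      calc specNorm (projTsym M' (Istar K S)) ≤ 2 * specNorm (Istar K S) :=
            specNorm_projTsym_le _ _
        _ ≤ 2 * (betaOmega K * specNorm S) := by
            have := betaOmega_le K hS; linarith
        _ ≤ 2 * (betaC K * specNorm S) := by
            have hbb : betaOmega K ≤ betaC K := le_max_left _ _
            have h := mul_le_mul_of_nonneg_right hbb (specNorm_nonneg S)
            linarith
        _ ≤ 2 * betaC K * (muOmega (Sstar K) * maxNorm S) := by
            have h := mul_le_mul_of_nonneg_left (muOmega_le K hS) hβ0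
            nlinarith
    linarith
  -- case split on which term attains the max
  rcases le_or_gt (specNorm L) (maxNorm S / γ) with hcase | hcase
  · -- g = maxNorm S / γ
    have hg : gNorm γ S L = maxNorm S / γ := max_eq_left hcase
    rcases lt_or_eq_of_le hγ0 with hγpos | hγzero
    · -- γ > 0
      have hkey : alphaC K / 2 * maxNorm S
          ≤ maxNorm (projOmega (Sstar K) (Istar K (S + L))) := by
        have hsLγ : specNorm L * γ ≤ maxNorm S := by
          rw [le_div_iff₀ hγpos] at hcase; exact hcase
        nlinarith [mul_le_mul_of_nonneg_right h5βξ hsL0]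
      rw [hg]
      refine le_trans ?_ (le_max_left _ _)
      rw [← mul_div_assoc]
      gcongr
    · -- γ = 0
      rw [hg, ← hγzero]
      have : maxNorm S / 0 = 0 := div_zero _
      rw [← hγzero] at hcase
      rw [this] at hcase ⊢
      rw [mul_zero]
      exact gNorm_nonneg _ _ _
  · -- g = specNorm L
    have hg : gNorm γ S L = specNorm L := max_eq_right hcase.le
    rw [hg]
    refine le_trans ?_ (le_max_right (maxNorm (projOmega (Sstar K) (Istar K (S + L))) / γ) _)
    rcases lt_or_eq_of_le hγ0 with hγpos | hγzero
    · have hmSγ : maxNorm S ≤ specNorm L * γ := by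
        rw [div_lt_iff₀ hγpos] at hcase; exact hcase.le
      -- need 2βμγ ≤ α/2
      by_cases hden : 0 < 2 * betaC K * (2 - ν) * muOmega (Sstar K)
      · have hγhi' : γ * (2 * betaC K * (2 - ν) * muOmega (Sstar K)) ≤ ν * alphaC K :=
          (le_div_iff₀ hden).mp hγhi
        have hcross2 : 2 * betaC K * muOmega (Sstar K) * γ ≤ alphaC K / 2 := by
          nlinarith [mul_nonneg (mul_nonneg hβ0 hμ0) hγ0]
        nlinarith [mul_nonneg (mul_nonneg hβ0 hμ0) hmS0,
          mul_le_mul_of_nonneg_right hcross2 hsL0,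
          mul_le_mul_of_nonneg_left hmSγ (mul_nonneg (mul_nonneg (by norm_num : (0:ℝ) ≤ 2) hβ0) hμ0)]
      · push_neg at hden
        have hβμ : betaC K * muOmega (Sstar K) = 0 := by nlinarith
        nlinarith [hR2]
    · -- γ = 0 in case B
      rw [← hγzero] at hcase hγlo
      rw [div_zero] at hcase
      have hnum : 3 * betaC K * (2 - ν) * xiT (Lstar K) = 0 := by
        have hnn : 0 ≤ 3 * betaC K * (2 - ν) * xiT (Lstar K) := by
          have := mul_nonneg (mul_nonneg (mul_nonneg (by norm_num : (0:ℝ) ≤ 3) hβ0) h2ν.le) hξ0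
          exact this
        have hdiv0 : 3 * betaC K * (2 - ν) * xiT (Lstar K) / (ν * alphaC K) = 0 :=
          le_antisymm hγlo (div_nonneg hnn hνα.le)
        rcases div_eq_zero_iff.mp hdiv0 with h' | h'
        · exact h'
        · exact absurd h' hνα.ne'
      rcases mul_eq_zero.mp hnum with h1 | h1
      · rcases mul_eq_zero.mp h1 with h2 | h2
        · rcases mul_eq_zero.mp h2 with h3 | h3
          · norm_num at h3
          · -- betaC K = 0
            nlinarith [hR2, mul_nonneg hμ0 hmS0]
        · linarith
      · -- xiT = 0
        have hL0 : maxNorm L ≤ 0 := by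
          have := maxNorm_le_xi_nearby K hM' hL
          rw [h1] at this
          simpa using this
        have : L = 0 := maxNorm_eq_zero (le_antisymm hL0 (maxNorm_nonneg L))
        rw [this, specNorm_zero] at hcase
        linarith


end LVGGM
/-- Proposition: minimum gain of the Fisher information on `Ω ⊕ T'`. -/
theorem statement_7 {p h : ℕ} (K : Matrix (Fin p ⊕ Fin h) (Fin p ⊕ Fin h) ℝ)
    (hK : K.PosDef) (ν γ : ℝ)
    (hν : ν ∈ Set.Ioc (0 : ℝ) (1 / 2))
    (hirr : LVGGM.deltaC K / LVGGM.alphaC K ≤ 1 - 2 * ν)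
    (hμξ : LVGGM.muOmega (LVGGM.Sstar K) * LVGGM.xiT (LVGGM.Lstar K) ≤
      (1 / 6) * (ν * LVGGM.alphaC K / (LVGGM.betaC K * (2 - ν))) ^ 2)
    (hγ : γ ∈ Set.Icc
      (3 * LVGGM.betaC K * (2 - ν) * LVGGM.xiT (LVGGM.Lstar K) / (ν * LVGGM.alphaC K))
      (ν * LVGGM.alphaC K / (2 * LVGGM.betaC K * (2 - ν) * LVGGM.muOmega (LVGGM.Sstar K)))) :
    ∀ M' : Matrix (Fin p) (Fin p) ℝ, LVGGM.Nearby (LVGGM.Lstar K) M' →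
      ∀ S L : Matrix (Fin p) (Fin p) ℝ,
        S ∈ LVGGM.OmegaSet (LVGGM.Sstar K) → L ∈ LVGGM.TsetSym M' →
          LVGGM.alphaC K / 2 * LVGGM.gNorm γ S L ≤
            LVGGM.gNorm γ (LVGGM.projOmega (LVGGM.Sstar K) (LVGGM.Istar K (S + L)))
              (LVGGM.projTsym M' (LVGGM.Istar K (S + L))) :=
  LVGGM.key_prop K ν γ hν hγ
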